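/- (Upper bound (12).) Let n ≥ 1 and let x be a schedule. Then the worst-case regret satisfies Z(x) ≤ max over jobs j ∉ H(x) of ( C_max(x, r̄^j) − ( r⁺ j + min over machines i of p i j ) ), the maximum being over the nonempty set of jobs not in H(x). -/

import Mathlib

open Finset

/-- A schedule assigns to each machine a finite sequence of jobs such that
every job occurs exactly once among all the sequences. -/
structure Schedule (m n : ℕ) where
  seq : Fin m → List (Fin n)
  valid : ∀ j : Fin n, (∑ i : Fin m, (seq i).count j) = 1

variable {m n : ℕ}

/-- Completion time after processing the list `L` of jobs on a machine with
processing times `q` and release dates `r`; recursively `C₀ = 0`,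
`C_k = q j_k + max C_{k-1} (r j_k)`. -/
def mComp (q r : Fin n → ℝ) (L : List (Fin n)) : ℝ :=
  L.foldl (fun c j => q j + max c (r j)) 0

/-- Makespan of the schedule `x` under the release dates `r`. -/
noncomputable def Cmax (p : Fin m → Fin n → ℝ) (x : Schedule m n) (r : Fin n → ℝ) : ℝ :=
  ⨆ i : Fin m, mComp (p i) r (x.seq i)

/-- Optimal makespan `C*(r)`: the minimum of `Cmax` over all schedules. -/
noncomputable def Cstar (p : Fin m → Fin n → ℝ) (r : Fin n → ℝ) : ℝ :=
  ⨅ x : Schedule m n, Cmax p x r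

/-- Regret of schedule `x` under scenario `r`. -/
noncomputable def regret (p : Fin m → Fin n → ℝ) (x : Schedule m n) (r : Fin n → ℝ) : ℝ :=
  Cmax p x r - Cstar p r

/-- The scenario box determined by the interval bounds. -/
def box (rlo rhi : Fin n → ℝ) : Set (Fin n → ℝ) :=
  {r | ∀ j, rlo j ≤ r j ∧ r j ≤ rhi j}

/-- Worst-case regret `Z(x)`. -/
noncomputable def Zreg (p : Fin m → Fin n → ℝ) (x : Schedule m n) (rlo rhi : Fin n → ℝ) : ℝ :=
  sSup ((fun r => regret p x r) '' box rlo rhi)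

/-- Extreme scenario `r̄^j`. -/
def extSc (rlo rhi : Fin n → ℝ) (j : Fin n) : Fin n → ℝ :=
  Function.update rlo j (rhi j)

/-- The set `H(x)` of jobs whose release interval is covered by the
processing of their predecessors (positions are 0-indexed: job at position
`k ≥ 1` has predecessors `(x.seq i).take k`). -/
def Hset (p : Fin m → Fin n → ℝ) (rlo rhi : Fin n → ℝ) (x : Schedule m n) : Set (Fin n) :=
  {j | ∃ i : Fin m, ∃ k : ℕ, 1 ≤ k ∧ (x.seq i)[k]? = some j ∧
    rhi j ≤ mComp (p i) rlo ((x.seq i).take k)}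

/-- Lower bound `LB₁(r) = max_j (r j + min_i p i j)`. -/
noncomputable def LB1 (p : Fin m → Fin n → ℝ) (r : Fin n → ℝ) : ℝ :=
  ⨆ j : Fin n, (r j + ⨅ i : Fin m, p i j)

/-- Lower bound `LB(r) = min_j r j + m⁻¹ ∑_j min_i p i j`. -/
noncomputable def LB0 (p : Fin m → Fin n → ℝ) (r : Fin n → ℝ) : ℝ :=
  (⨅ j : Fin n, r j) + (m : ℝ)⁻¹ * ∑ j : Fin n, ⨅ i : Fin m, p i j

/-- `E_j(r)`: the jobs unavailable before `j`. -/
noncomputable def Ej (r : Fin n → ℝ) (j : Fin n) : Finset (Fin n) :=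
  Finset.univ.filter fun t => r j ≤ r t

lemma Ej_nonempty (r : Fin n → ℝ) (j : Fin n) : (Ej r j).Nonempty :=
  ⟨j, by simp [Ej]⟩

/-- `W_j(E_j(r), p)` from the paper. -/
noncomputable def W2 (p : Fin m → Fin n → ℝ) (r : Fin n → ℝ) (j : Fin n) : ℝ :=
  (Ej r j).inf' (Ej_nonempty r j) r + (m : ℝ)⁻¹ * ∑ t ∈ Ej r j, ⨅ i : Fin m, p i t

/-- Lower bound `LB₂(r)`. -/
noncomputable def LB2 (p : Fin m → Fin n → ℝ) (r : Fin n → ℝ) : ℝ :=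
  ⨆ j : Fin n, W2 p r j

/-- `W̃_j(E_j(r), p_w)` from the paper, with `λ_j = ⌈|E_j(r)|/m⌉`. -/
noncomputable def W3 (p : Fin m → Fin n → ℝ) (r : Fin n → ℝ) (j : Fin n) : ℝ :=
  (Ej r j).inf' (Ej_nonempty r j) r +
    (⌈((Ej r j).card : ℝ) / (m : ℝ)⌉ : ℝ) *
      (Ej r j).inf' (Ej_nonempty r j) (fun t => ⨅ i : Fin m, p i t)

/-- Lower bound `LB₃(r)`. -/
noncomputable def LB3 (p : Fin m → Fin n → ℝ) (r : Fin n → ℝ) : ℝ :=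
  ⨆ j : Fin n, W3 p r j

/-- The combined lower bound `LB(r̄) = max {LB₁, LB₂, LB₃}`. -/
noncomputable def LBall (p : Fin m → Fin n → ℝ) (r : Fin n → ℝ) : ℝ :=
  max (LB1 p r) (max (LB2 p r) (LB3 p r))

-- helpers
def F (q r : Fin n → ℝ) (c : ℝ) (j : Fin n) : ℝ := q j + max c (r j)

lemma mComp_def (q r : Fin n → ℝ) (L : List (Fin n)) : mComp q r L = L.foldl (F q r) 0 := rfl

lemma foldF_le_add {q r r' : Fin n → ℝ} {δ : ℝ} (hδ : 0 ≤ δ) (hr : ∀ t, r' t ≤ r t + δ) :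
    ∀ (L : List (Fin n)) {c c' : ℝ}, c' ≤ c + δ →
      L.foldl (F q r') c' ≤ L.foldl (F q r) c + δ := by
  intro L
  induction L with
  | nil => intro c c' h; simpa using h
  | cons j L ih =>
    intro c c' h
    simp only [List.foldl_cons]
    apply ih
    have h1 : max c' (r' j) ≤ max c (r j) + δ := by
      apply max_le
      · exact h.trans (by simp [le_max_left, add_le_add_right, le_max_left c (r j)])
      · exact (hr j).trans (by simp [add_le_add_right, le_max_right c (r j)])
    simp only [F]; linarith

lemma mComp_mono_r {q r r' : Fin n → ℝ} (h : ∀ t, r t ≤ r' t) (L : List (Fin n)) :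
    mComp q r L ≤ mComp q r' L := by
  have := foldF_le_add (q := q) (r := r') (r' := r) (δ := 0) le_rfl
    (fun t => by simpa using h t) L (c := 0) (c' := 0) (by simp)
  simpa [mComp_def] using this

lemma foldF_ge_sum {q r : Fin n → ℝ} :
    ∀ (L : List (Fin n)) (c : ℝ), c + (L.map q).sum ≤ L.foldl (F q r) c := by
  intro L
  induction L with
  | nil => intro c; simp
  | cons j L ih =>
    intro c
    simp only [List.foldl_cons, List.map_cons, List.sum_cons]
    have h1 : c + q j ≤ F q r c j := by simp [F, le_max_left]; linarith [le_max_left c (r j)]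
    have := ih (F q r c j)
    linarith

lemma mComp_nonneg {q r : Fin n → ℝ} (hq : ∀ j, 0 < q j) (L : List (Fin n)) :
    0 ≤ mComp q r L := by
  have h1 : (0:ℝ) ≤ (L.map q).sum := List.sum_nonneg (by
    intro a ha; obtain ⟨b, _, rfl⟩ := List.mem_map.mp ha; exact (hq b).le)
  have := foldF_ge_sum (q := q) (r := r) L 0
  rw [mComp_def]; linarith

lemma mComp_split_ge (q r : Fin n → ℝ) (A B : List (Fin n)) (j : Fin n) :
    r j + q j + (B.map q).sum ≤ mComp q r (A ++ j :: B) := by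
  rw [mComp_def, List.foldl_append, List.foldl_cons]
  have h1 : r j + q j ≤ F q r (A.foldl (F q r) 0) j := by
    simp only [F]; linarith [le_max_right (A.foldl (F q r) 0) (r j)]
  have := foldF_ge_sum (q := q) (r := r) B (F q r (A.foldl (F q r) 0) j)
  linarith

lemma crit {q rlo rhi r : Fin n → ℝ} (h0 : ∀ j, 0 ≤ rlo j) (hlt : ∀ j, rlo j < rhi j)
    (hbox : ∀ j, rlo j ≤ r j ∧ r j ≤ rhi j) (L : List (Fin n)) :
    L = [] ∨ ∃ (A : List (Fin n)) (j : Fin n) (B : List (Fin n)), L = A ++ j :: B ∧ mComp q rlo A < rhi j ∧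
      mComp q r L ≤ r j + q j + (B.map q).sum := by
  induction L using List.reverseRecOn with
  | nil => exact Or.inl rfl
  | append_singleton L' j IH =>
    right
    have hval : mComp q r (L' ++ [j]) = q j + max (mComp q r L') (r j) := by
      simp [mComp_def, List.foldl_append, F]
    by_cases h1 : rhi j ≤ mComp q rlo L'
    · have hne : L' ≠ [] := by
        intro h; rw [h] at h1
        simp [mComp_def] at h1
        linarith [h0 j, hlt j]
      rcases IH with h | ⟨A, j', B, hsp, hg, hb⟩
      · exact absurd h hne
      · refine ⟨A, j', B ++ [j], by rw [hsp]; simp, hg, ?_⟩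
        have hrj : r j ≤ mComp q r L' :=
          ((hbox j).2.trans h1).trans (mComp_mono_r (fun t => (hbox t).1) L')
        rw [hval, max_eq_left hrj]
        simp only [List.map_append, List.sum_append, List.map_cons, List.map_nil,
          List.sum_cons, List.sum_nil]
        linarith
    · have hg : mComp q rlo L' < rhi j := not_le.mp h1
      by_cases h2 : mComp q r L' ≤ r j
      · refine ⟨L', j, [], rfl, hg, ?_⟩
        rw [hval, max_eq_right h2]; simp; linarith
      · push_neg at h2
        have hne : L' ≠ [] := by
          intro h; rw [h] at h2
          simp [mComp_def] at h2
          linarith [h0 j, (hbox j).1]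
        rcases IH with h | ⟨A, j', B, hsp, hg', hb⟩
        · exact absurd h hne
        · refine ⟨A, j', B ++ [j], by rw [hsp]; simp, hg', ?_⟩
          rw [hval, max_eq_left h2.le]
          simp only [List.map_append, List.sum_append, List.map_cons, List.map_nil,
            List.sum_cons, List.sum_nil]
          linarith

section sched
variable {p : Fin m → Fin n → ℝ}

lemma cmax_nonneg (hm : 0 < m) (hp : ∀ i j, 0 < p i j) (x : Schedule m n) (r : Fin n → ℝ) :
    0 ≤ Cmax p x r := by
  haveI : Nonempty (Fin m) := ⟨⟨0, hm⟩⟩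
  refine le_trans (mComp_nonneg (r := r) (hp ⟨0, hm⟩) (x.seq ⟨0, hm⟩)) ?_
  exact le_ciSup (f := fun i => mComp (p i) r (x.seq i)) (Set.Finite.bddAbove (Set.finite_range _)) ⟨0, hm⟩

lemma exists_mem_seq (x : Schedule m n) (t : Fin n) : ∃ i, t ∈ x.seq i := by
  have hv := x.valid t
  by_contra h
  push_neg at h
  have : ∀ i, (x.seq i).count t = 0 := fun i => List.count_eq_zero.mpr (h i)
  simp [this] at hv

lemma cmax_ge_job (hm : 0 < m) (hp : ∀ i j, 0 < p i j) (y : Schedule m n) (r : Fin n → ℝ)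
    (t : Fin n) : r t + (⨅ i, p i t) ≤ Cmax p y r := by
  obtain ⟨i, hmem⟩ := exists_mem_seq y t
  obtain ⟨A, B, hsp⟩ := List.append_of_mem hmem
  have hB : (0:ℝ) ≤ (B.map (p i)).sum := List.sum_nonneg (by
    intro a ha; obtain ⟨b, _, rfl⟩ := List.mem_map.mp ha; exact (hp i b).le)
  have h1 : r t + p i t ≤ mComp (p i) r (y.seq i) := by
    rw [hsp]; linarith [mComp_split_ge (p i) r A B t]
  have h2 : (⨅ i', p i' t) ≤ p i t :=
    ciInf_le (Set.Finite.bddBelow (Set.finite_range _)) i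
  haveI : Nonempty (Fin m) := ⟨⟨0, hm⟩⟩
  calc r t + (⨅ i', p i' t) ≤ mComp (p i) r (y.seq i) := by linarith
    _ ≤ Cmax p y r := le_ciSup (f := fun i' => mComp (p i') r (y.seq i')) (Set.Finite.bddAbove (Set.finite_range _)) i

def oneMachine (hm : 0 < m) : Schedule m n where
  seq := fun i => if i = ⟨0, hm⟩ then List.finRange n else []
  valid := by
    intro j
    rw [Finset.sum_eq_single (⟨0, hm⟩ : Fin m)]
    · simp [List.count_eq_one_of_mem (List.nodup_finRange n) (List.mem_finRange j)]
    · intro b _ hb; simp [hb]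
    · simp

lemma cstar_nonneg (hm : 0 < m) (hp : ∀ i j, 0 < p i j) (r : Fin n → ℝ) :
    0 ≤ Cstar p r := by
  haveI : Nonempty (Schedule m n) := ⟨oneMachine hm⟩
  exact le_ciInf fun y => cmax_nonneg hm hp y r

lemma cstar_ge_job (hm : 0 < m) (hp : ∀ i j, 0 < p i j) (r : Fin n → ℝ) (t : Fin n) :
    r t + (⨅ i, p i t) ≤ Cstar p r := by
  haveI : Nonempty (Schedule m n) := ⟨oneMachine hm⟩
  exact le_ciInf fun y => cmax_ge_job hm hp y r t

lemma cmax_shift (hm : 0 < m) (x : Schedule m n) {r r' : Fin n → ℝ} {δ : ℝ} (hδ : 0 ≤ δ)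
    (hr : ∀ t, r' t ≤ r t + δ) : Cmax p x r' ≤ Cmax p x r + δ := by
  haveI : Nonempty (Fin m) := ⟨⟨0, hm⟩⟩
  apply ciSup_le
  intro i
  calc mComp (p i) r' (x.seq i) ≤ mComp (p i) r (x.seq i) + δ := by
        have := foldF_le_add (q := p i) hδ hr (x.seq i) (c := 0) (c' := 0) (by simpa using hδ)
        simpa [mComp_def] using this
    _ ≤ Cmax p x r + δ :=
        add_le_add_left (le_ciSup (f := fun i' => mComp (p i') r (x.seq i')) (Set.Finite.bddAbove (Set.finite_range _)) i) δ

lemma cstar_shift (hm : 0 < m) (hp : ∀ i j, 0 < p i j) {r r' : Fin n → ℝ} {δ : ℝ}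
    (hδ : 0 ≤ δ) (hr : ∀ t, r' t ≤ r t + δ) : Cstar p r' ≤ Cstar p r + δ := by
  haveI : Nonempty (Schedule m n) := ⟨oneMachine hm⟩
  have hb : BddBelow (Set.range fun y : Schedule m n => Cmax p y r') := by
    refine ⟨0, ?_⟩; rintro z ⟨y, rfl⟩; exact cmax_nonneg hm hp y r'
  have : Cstar p r' - δ ≤ Cstar p r := by
    apply le_ciInf
    intro y
    have h1 := ciInf_le hb y
    have h2 := cmax_shift (p := p) hm y hδ hr
    simp only [Cstar]
    linarith
  linarith

lemma not_mem_Hset (rlo rhi : Fin n → ℝ) (x : Schedule m n) (i : Fin m)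
    (A B : List (Fin n)) (j : Fin n) (hsplit : x.seq i = A ++ j :: B)
    (hgood : mComp (p i) rlo A < rhi j) : j ∉ Hset p rlo rhi x := by
  rintro ⟨i', k, hk1, hget, hcomp⟩
  have hvalid := x.valid j
  have hci : (x.seq i).count j = A.count j + (B.count j + 1) := by
    rw [hsplit]; simp [List.count_append, List.count_cons]
  have hle : (x.seq i).count j ≤ 1 := by
    rw [← hvalid]
    exact Finset.single_le_sum (f := fun i'' => (x.seq i'').count j)
      (fun _ _ => Nat.zero_le _) (Finset.mem_univ i)
  have hA0 : j ∉ A := by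
    rw [← List.count_eq_zero]; omega
  have hB0 : j ∉ B := by
    rw [← List.count_eq_zero]; omega
  have hi' : i' = i := by
    by_contra hne
    have hmem : j ∈ x.seq i' := by
      rw [List.getElem?_eq_some_iff] at hget
      obtain ⟨hk, h⟩ := hget
      rw [← h]; exact List.getElem_mem hk
    have hc1 : 1 ≤ (x.seq i').count j := List.count_pos_iff.mpr hmem
    have hpair : ∑ i'' ∈ ({i', i} : Finset (Fin m)), (x.seq i'').count j ≤
        ∑ i'', (x.seq i'').count j :=
      Finset.sum_le_sum_of_subset (Finset.subset_univ _)
    rw [Finset.sum_pair hne] at hpair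
    omega
  subst hi'
  rw [hsplit] at hget hcomp
  have hk : k = A.length := by
    rcases lt_trichotomy k A.length with h | h | h
    · exfalso
      rw [List.getElem?_append, if_pos h] at hget
      exact hA0 (by
        rw [List.getElem?_eq_some_iff] at hget
        obtain ⟨hk', h'⟩ := hget
        rw [← h']; exact List.getElem_mem hk')
    · exact h
    · exfalso
      rw [List.getElem?_append_right h.le] at hget
      obtain ⟨d, hd⟩ : ∃ d, k - A.length = d + 1 := ⟨k - A.length - 1, by omega⟩
      rw [hd, List.getElem?_cons_succ] at hget
      exact hB0 (by
        rw [List.getElem?_eq_some_iff] at hget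
        obtain ⟨hk', h'⟩ := hget
        rw [← h']; exact List.getElem_mem hk')
  rw [hk, List.take_left] at hcomp
  linarith

end sched


/-- Upper bound (12): the worst-case regret is bounded above
by `max_{j ∉ H(x)} ( C_max(x, r̄^j) − (r⁺ j + min_i p i j) )`, the maximum
being taken over the nonempty set of jobs not in `H(x)`. -/
theorem worst_case_regret_upper_bound {m n : ℕ} (hm : 0 < m) (hn : 1 ≤ n)
    (p : Fin m → Fin n → ℝ) (hp : ∀ i j, 0 < p i j)
    (rlo rhi : Fin n → ℝ) (hlo : ∀ j, 0 ≤ rlo j) (hlt : ∀ j, rlo j < rhi j)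
    (x : Schedule m n) :
    ((Hset p rlo rhi x)ᶜ).Nonempty ∧
      Zreg p x rlo rhi ≤
        ⨆ j : ((Hset p rlo rhi x)ᶜ : Set (Fin n)),
          (Cmax p x (extSc rlo rhi (j : Fin n)) -
            (rhi (j : Fin n) + ⨅ i : Fin m, p i (j : Fin n))) := by
  haveI : Nonempty (Fin m) := ⟨⟨0, hm⟩⟩
  haveI : Nonempty (Schedule m n) := ⟨oneMachine hm⟩
  obtain ⟨i0, hmem0⟩ := exists_mem_seq x ⟨0, hn⟩
  have hne0 : x.seq i0 ≠ [] := by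
    intro h; rw [h] at hmem0; exact List.not_mem_nil hmem0
  obtain ⟨j0, t0, h0eq⟩ := List.exists_cons_of_ne_nil hne0
  have hj0 : j0 ∉ Hset p rlo rhi x := by
    apply not_mem_Hset rlo rhi x i0 [] t0 j0 (by simpa using h0eq)
    have : mComp (p i0) rlo [] = 0 := rfl
    rw [this]
    linarith [hlo j0, hlt j0]
  set f : ((Hset p rlo rhi x)ᶜ : Set (Fin n)) → ℝ := fun j =>
    Cmax p x (extSc rlo rhi (j : Fin n)) -
      (rhi (j : Fin n) + ⨅ i : Fin m, p i (j : Fin n)) with hf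
  have hbddS : BddAbove (Set.range f) := Set.Finite.bddAbove (Set.finite_range _)
  have hterm : ∀ (j : Fin n) (hj : j ∉ Hset p rlo rhi x),
      Cmax p x (extSc rlo rhi j) - (rhi j + ⨅ i, p i j) ≤ ⨆ j', f j' :=
    fun j hj => le_ciSup hbddS ⟨j, hj⟩
  have hupdj : ∀ j : Fin n, extSc rlo rhi j j = rhi j := by
    intro j; simp [extSc]
  have hterm0 : ∀ j : Fin n, 0 ≤ Cmax p x (extSc rlo rhi j) - (rhi j + ⨅ i, p i j) := by
    intro j
    have h := cmax_ge_job hm hp x (extSc rlo rhi j) j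
    rw [hupdj j] at h
    linarith
  have hS0 : 0 ≤ ⨆ j', f j' := le_trans (hterm0 j0) (hterm j0 hj0)
  refine ⟨⟨j0, hj0⟩, ?_⟩
  have key : ∀ r : Fin n → ℝ, r ∈ box rlo rhi → Cmax p x r ≤ Cstar p r + ⨆ j', f j' := by
    intro r hr
    apply ciSup_le
    intro i
    rcases crit (q := p i) hlo hlt hr (x.seq i) with hnil | ⟨A, j, B, hsplit, hgood, hbound⟩
    · rw [hnil]
      have h0 : mComp (p i) r [] = 0 := rfl
      rw [h0]
      linarith [cstar_nonneg hm hp r]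
    · set r' := extSc rlo rhi j with hr'
      have hδ : 0 ≤ rhi j - r j := by linarith [(hr j).2]
      have hupj : r' j = rhi j := hupdj j
      have hupt : ∀ t, t ≠ j → r' t = rlo t := by
        intro t ht; simp [hr', extSc, Function.update_of_ne ht]
      have h1 : rhi j + p i j + (B.map (p i)).sum ≤ Cmax p x r' := by
        have hsg := mComp_split_ge (p i) r' A B j
        rw [hupj] at hsg
        calc rhi j + p i j + (B.map (p i)).sum ≤ mComp (p i) r' (x.seq i) := by
              rw [hsplit]; linarith
          _ ≤ Cmax p x r' := le_ciSup (f := fun i' => mComp (p i') r' (x.seq i'))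
              (Set.Finite.bddAbove (Set.finite_range _)) i
      have h2 : Cstar p r' ≤ Cstar p r + (rhi j - r j) := by
        apply cstar_shift hm hp hδ
        intro t
        by_cases ht : t = j
        · subst ht; rw [hupj]; linarith
        · rw [hupt t ht]; linarith [(hr t).1]
      have h3 : rhi j + (⨅ i', p i' j) ≤ Cstar p r' := by
        have h := cstar_ge_job hm hp r' j
        rwa [hupj] at h
      have h4 : j ∉ Hset p rlo rhi x := not_mem_Hset rlo rhi x i A B j hsplit hgood
      have h5 := hterm j h4
      rw [← hr'] at h5
      linarith
  simp only [Zreg]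
  apply csSup_le
  · exact ⟨regret p x rlo, ⟨rlo, fun j => ⟨le_refl _, (hlt j).le⟩, rfl⟩⟩
  · rintro z ⟨r, hr, rfl⟩
    have h := key r hr
    simp only [regret]
    linarith
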